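/- Let ε > 0 and let a < b be real numbers with b − a < ε. Let q : ℝ → ℝ be continuous with |q(t)| ≤ ε⁻² for all t ∈ [a,b], and let v : ℝ → ℝ be twice continuously differentiable with v''(t) = q(t)·v(t) for all t ∈ [a,b], v(a) = 0 and v'(a) = 1. Then v'(t) > 0 for all t ∈ (a,b); in particular v(t) > 0 for all t ∈ (a,b]. -/

import Mathlib

open Real Set

/-- Core estimate of Lemma 2.2(a): if `|q| ≤ ε⁻²` on `[a,b]` with
`b - a < ε`, and `v'' = q·v`, `v(a) = 0`, `v'(a) = 1`, then `v' > 0` on `(a,b)` and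
`v > 0` on `(a,b]`. -/
theorem stmt_0 (ε a b : ℝ) (hε : 0 < ε) (hab : a < b) (hlen : b - a < ε)
    (q v : ℝ → ℝ) (hq : Continuous q)
    (hqb : ∀ t ∈ Icc a b, |q t| ≤ (ε ^ 2)⁻¹)
    (hv : ContDiff ℝ 2 v)
    (hode : ∀ t ∈ Icc a b, deriv (deriv v) t = q t * v t)
    (hva : v a = 0) (hv'a : deriv v a = 1) :
    (∀ t ∈ Ioo a b, 0 < deriv v t) ∧ (∀ t ∈ Ioc a b, 0 < v t) := by
  have hεne : (ε : ℝ) ≠ 0 := ne_of_gt hε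
  have hv1 : Differentiable ℝ v := hv.differentiable (by norm_num)
  have hv2 : ContDiff ℝ 1 (deriv v) := by
    have := (contDiff_succ_iff_deriv (n := 1)).mp (by exact_mod_cast hv)
    exact this.2.2
  have hv'd : Differentiable ℝ (deriv v) := hv2.differentiable one_ne_zero
  have hv'c : Continuous (deriv v) := hv'd.continuous
  -- the comparison functions
  set z : ℝ → ℝ := fun t => ε * Real.sin ((t - a) / ε) with hzdef
  set w : ℝ → ℝ := fun t => Real.cos ((t - a) / ε) with hwdef
  set W : ℝ → ℝ := fun t => deriv v t * z t - v t * w t with hWdef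
  have hlin : ∀ t : ℝ, HasDerivAt (fun s => (s - a) / ε) (1 / ε) t := by
    intro t
    simpa using ((hasDerivAt_id t).sub_const a).div_const ε
  have hzd : ∀ t : ℝ, HasDerivAt z (w t) t := by
    intro t
    have h := ((Real.hasDerivAt_sin ((t - a) / ε)).comp t (hlin t)).const_mul ε
    simpa [hzdef, hwdef, mul_comm, mul_assoc, mul_div_assoc, hεne] using h
  have hwd : ∀ t : ℝ, HasDerivAt w (-(ε ^ 2)⁻¹ * z t) t := by
    intro t
    have h := (Real.hasDerivAt_cos ((t - a) / ε)).comp t (hlin t)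
    have heq : -Real.sin ((t - a) / ε) * (1 / ε) = -(ε ^ 2)⁻¹ * z t := by
      simp only [hzdef]
      field_simp
    rw [← heq]
    simpa [hwdef, Function.comp_def] using h
  have hWd : ∀ t : ℝ,
      HasDerivAt W (deriv (deriv v) t * z t + (ε ^ 2)⁻¹ * (v t * z t)) t := by
    intro t
    have h1 : HasDerivAt (fun s => deriv v s * z s)
        (deriv (deriv v) t * z t + deriv v t * w t) t :=
      ((hv'd t).hasDerivAt).mul (hzd t)
    have h2 : HasDerivAt (fun s => v s * w s)
        (deriv v t * w t + v t * (-(ε ^ 2)⁻¹ * z t)) t :=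
      ((hv1 t).hasDerivAt).mul (hwd t)
    have h := h1.sub h2
    convert h using 1 <;> try rfl
    ring
  have hcz : Continuous z := by
    rw [hzdef]
    exact continuous_const.mul
      (Real.continuous_sin.comp ((continuous_id.sub continuous_const).div_const ε))
  have hcw : Continuous w := by
    rw [hwdef]
    exact Real.continuous_cos.comp ((continuous_id.sub continuous_const).div_const ε)
  have hcW : Continuous W := by
    rw [hWdef]
    exact (hv'c.mul hcz).sub (hv1.continuous.mul hcw)
  have hπ : (1 : ℝ) < π / 2 := by
    have := Real.pi_gt_three; linarith
  -- main claim
  have key : ∀ t ∈ Ioo a b, 0 < deriv v t := by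
    by_contra h
    push_neg at h
    obtain ⟨t₀, ht₀, ht₀'⟩ := h
    set S : Set ℝ := Icc a t₀ ∩ {t | deriv v t ≤ 0} with hSdef
    have hSne : S.Nonempty := ⟨t₀, ⟨ht₀.1.le, le_rfl⟩, ht₀'⟩
    have hSclosed : IsClosed S :=
      isClosed_Icc.inter (isClosed_le hv'c continuous_const)
    have hSbdd : BddBelow S := ⟨a, fun x hx => hx.1.1⟩
    set c : ℝ := sInf S with hcdef
    have hcS : c ∈ S := hSclosed.csInf_mem hSne hSbdd
    have hac : a ≤ c := hcS.1.1
    have hct₀ : c ≤ t₀ := hcS.1.2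
    have hcb : c < b := lt_of_le_of_lt hct₀ ht₀.2
    have hca : a < c := by
      rcases lt_or_eq_of_le hac with h | h
      · exact h
      · exfalso
        have h2 : deriv v c ≤ 0 := hcS.2
        rw [← h, hv'a] at h2
        linarith
    have hpos : ∀ t ∈ Ico a c, 0 < deriv v t := by
      intro t ht
      by_contra hle
      push_neg at hle
      have : t ∈ S := ⟨⟨ht.1, le_trans ht.2.le hct₀⟩, hle⟩
      exact absurd (csInf_le hSbdd this) (not_le.mpr ht.2)
    have hmono : StrictMonoOn v (Icc a c) := by
      apply strictMonoOn_of_deriv_pos (convex_Icc a c) hv1.continuous.continuousOn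
      intro t ht
      rw [interior_Icc] at ht
      exact hpos t ⟨ht.1.le, ht.2⟩
    have hvc : 0 < v c := by
      have := hmono ⟨le_rfl, hac⟩ ⟨hac, le_rfl⟩ hca
      rwa [hva] at this
    have hvnn : ∀ t ∈ Icc a c, 0 ≤ v t := by
      intro t ht
      rcases eq_or_lt_of_le ht.1 with h | h
      · rw [← h, hva]
      · have := hmono ⟨le_rfl, hac⟩ ht h
        rw [hva] at this; exact this.le
    have harg : ∀ t ∈ Icc a c, 0 ≤ (t - a) / ε ∧ (t - a) / ε < 1 := by
      intro t ht
      constructor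
      · exact div_nonneg (by linarith [ht.1]) hε.le
      · rw [div_lt_one hε]
        have : t < b := lt_of_le_of_lt ht.2 hcb
        linarith
    have hznn : ∀ t ∈ Icc a c, 0 ≤ z t := by
      intro t ht
      obtain ⟨h1, h2⟩ := harg t ht
      have := Real.sin_nonneg_of_nonneg_of_le_pi h1
        (by nlinarith [Real.pi_gt_three])
      exact mul_nonneg hε.le this
    have hzc : 0 < z c := by
      have h1 : 0 < (c - a) / ε := div_pos (by linarith) hε
      have h2 : (c - a) / ε < π := by
        have := (harg c ⟨hac, le_rfl⟩).2
        nlinarith [Real.pi_gt_three]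
      exact mul_pos hε (Real.sin_pos_of_pos_of_lt_pi h1 h2)
    have hwc : 0 < w c := by
      apply Real.cos_pos_of_mem_Ioo
      constructor
      · have := (harg c ⟨hac, le_rfl⟩).1
        nlinarith [Real.pi_gt_three]
      · have := (harg c ⟨hac, le_rfl⟩).2
        linarith
    -- W is monotone on [a, c]
    have hWmono : MonotoneOn W (Icc a c) := by
      apply monotoneOn_of_deriv_nonneg (convex_Icc a c)
      · exact hcW.continuousOn
      · intro t ht
        exact ((hWd t).differentiableAt).differentiableWithinAt
      · intro t ht
        rw [interior_Icc] at ht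
        have htb : t ∈ Icc a b := ⟨ht.1.le, le_trans ht.2.le hcb.le⟩
        rw [(hWd t).deriv, hode t htb]
        have h1 : 0 ≤ q t + (ε ^ 2)⁻¹ := by
          have := hqb t htb
          have := neg_abs_le (q t)
          linarith
        have h2 : 0 ≤ v t * z t :=
          mul_nonneg (hvnn t ⟨ht.1.le, ht.2.le⟩) (hznn t ⟨ht.1.le, ht.2.le⟩)
        nlinarith
    have hWa : W a = 0 := by
      simp [hWdef, hzdef, hva]
    have hWc : W c < 0 := by
      have h1 : deriv v c * z c ≤ 0 := mul_nonpos_of_nonpos_of_nonneg hcS.2 hzc.le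
      have h2 : 0 < v c * w c := mul_pos hvc hwc
      simp only [hWdef]
      linarith
    have := hWmono ⟨le_rfl, hac⟩ ⟨hac, le_rfl⟩ hac
    rw [hWa] at this
    linarith
  refine ⟨key, ?_⟩
  intro t ht
  have hmono : StrictMonoOn v (Icc a b) := by
    apply strictMonoOn_of_deriv_pos (convex_Icc a b) hv1.continuous.continuousOn
    intro s hs
    rw [interior_Icc] at hs
    exact key s hs
  have := hmono ⟨le_rfl, hab.le⟩ ⟨ht.1.le, ht.2⟩ ht.1
  rwa [hva] at this
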